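/- arXiv:2310.13145 — 2 statements merged into one kernel-verified Lean document; each statement's English description precedes it below -/
import Mathlib

section
/- Conversely, if a binary schedule u^on ∈ {0,1}^T (with induced u^su, u^sd) has the property that every maximal on-run that starts within the horizon has length at least T^U, then the minimum up-time constraints ∑_{i=t−T^U+1}^{t} u^su_i ≤ u^on_t hold for all t ∈ {T^U,...,T}. -/
/-- If every on-run starting within the horizon has length at
least `T^U` (runs truncated by the horizon end being exempt only if they
extend to `T`), then the minimum up-time constraints hold. -/
theorem on_runs_imply_min_uptime
    (T TU : ℕ) (hTU : 1 ≤ TU) (uon usu : ℕ → ℤ)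
    (hbin_on : ∀ t, t ≤ T → uon t = 0 ∨ uon t = 1)
    (hsu : ∀ t, 1 ≤ t → t ≤ T → usu t = max 0 (uon t - uon (t - 1)))
    (hruns : ∀ t, 1 ≤ t → t ≤ T → usu t = 1 →
      ∀ t', t ≤ t' → t' ≤ min (t + TU - 1) T → uon t' = 1) :
    ∀ t, TU ≤ t → t ≤ T →
      (∑ i ∈ Finset.Icc (t - TU + 1) t, usu i) ≤ uon t := by
  have hval : ∀ j, 1 ≤ j → j ≤ T →
      (usu j = 0 ∨ (usu j = 1 ∧ uon j - uon (j-1) = 1)) := by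
    intro j h1 h2
    have h := hsu j h1 h2
    have h3 := hbin_on j h2
    have h4 := hbin_on (j-1) (by omega)
    omega
  intro t ht1 ht2
  by_cases hex : ∃ i ∈ Finset.Icc (t - TU + 1) t, usu i = 1
  · obtain ⟨i, hi, hi1⟩ := hex
    simp only [Finset.mem_Icc] at hi
    have hiT : i ≤ T := by omega
    have hi1' : 1 ≤ i := by omega
    have hrun := hruns i hi1' hiT hi1
    have huont : uon t = 1 := hrun t (by omega) (by omega)
    have hzero : ∀ j ∈ Finset.Icc (t - TU + 1) t, j ≠ i → usu j = 0 := by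
      intro j hj hne
      simp only [Finset.mem_Icc] at hj
      rcases hval j (by omega) (by omega) with h0 | ⟨h1, h2⟩
      · exact h0
      · exfalso
        rcases lt_or_gt_of_ne hne with hlt | hgt
        · have hrunj := hruns j (by omega) (by omega) h1
          have hi1m : uon (i-1) = 1 := hrunj (i-1) (by omega) (by omega)
          rcases hval i hi1' hiT with h | ⟨_, h⟩
          · omega
          · have hbi := hbin_on i hiT
            omega
        · have hj1m : uon (j-1) = 1 := hrun (j-1) (by omega) (by omega)
          have hbj := hbin_on j (by omega)
          omega
    have hsum : (∑ i ∈ Finset.Icc (t - TU + 1) t, usu i) = 1 := by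
      rw [Finset.sum_eq_single_of_mem i (by simp only [Finset.mem_Icc]; omega) hzero, hi1]
    omega
  · push_neg at hex
    have hall : ∀ j ∈ Finset.Icc (t - TU + 1) t, usu j = 0 := by
      intro j hj
      simp only [Finset.mem_Icc] at hj
      rcases hval j (by omega) (by omega) with h | ⟨h, _⟩
      · exact h
      · exact absurd h (hex j (by simp only [Finset.mem_Icc]; omega))
    rw [Finset.sum_eq_zero hall]
    rcases hbin_on t ht2 with h | h <;> omega
end

section
/- Define the DP value function by backward recursion: c_{T+1,s} = 0 for s ∈ {0,1}, and for t ≤ T, c_{t,s} = min( L_t(s,s) + c_{t+1,s} , L_t(s,1−s) + ∑_{t'=t+1}^{min(t+T^min(1−s)−1,T)} L_{t'}(1−s,1−s) + c_{min(t+T^min(1−s),T+1), 1−s} ). Then c_{1,s₀} equals the minimum over all feasible schedules u ∈ {0,1}^T (satisfying transition, minimum up-time T^U and down-time T^D constraints, initial state s₀, and with any on/off run that begins within the horizon having length ≥ T^min) of ∑_{t=1}^T L_t(u_{t−1}, u_t), where u_0 = s₀ and T^min(1)=T^U, T^min(0)=T^D. -/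
/-- A schedule `u : ℕ → Bool` (with `u 0` the initial state) is feasible for
minimum run-length requirements `Tmin : Bool → ℕ`: whenever it switches to a
new state at time `t ∈ {1,…,T}`, it stays in that state for at least
`Tmin (u t)` periods or until the horizon ends. -/
def UCFeasible (T : ℕ) (Tmin : Bool → ℕ) (u : ℕ → Bool) : Prop :=
  ∀ t, 1 ≤ t → t ≤ T → u t ≠ u (t - 1) →
    ∀ t', t ≤ t' → t' ≤ min (t + Tmin (u t) - 1) T → u t' = u t

private lemma sum_Icc_split (f : ℕ → ℝ) {a b n : ℕ} (ha : 1 ≤ a) (hab : a ≤ b + 1)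
    (hbn : b ≤ n) :
    ∑ x ∈ Finset.Icc a n, f x
      = (∑ x ∈ Finset.Icc a b, f x) + ∑ x ∈ Finset.Icc (b+1) n, f x := by
  rw [show Finset.Icc a n = Finset.Ioc (a-1) n from by rw [← Finset.Icc_add_one_left_eq_Ioc]; congr 1; omega,
      show Finset.Icc a b = Finset.Ioc (a-1) b from by rw [← Finset.Icc_add_one_left_eq_Ioc]; congr 1; omega,
      show Finset.Icc (b+1) n = Finset.Ioc b n from Finset.Icc_add_one_left_eq_Ioc b n,
      Finset.sum_Ioc_consecutive _ (by omega) hbn]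

private lemma dp_aux (T : ℕ) (L : ℕ → Bool → Bool → ℝ)
    (Tmin : Bool → ℕ) (hT1 : ∀ s, 1 ≤ Tmin s)
    (c : ℕ → Bool → ℝ)
    (hterm : ∀ s, c (T + 1) s = 0)
    (hrec : ∀ t s, 1 ≤ t → t ≤ T →
      c t s = min (L t s s + c (t + 1) s)
        (L t s (!s) +
          (∑ t' ∈ Finset.Icc (t + 1) (min (t + Tmin (!s) - 1) T), L t' (!s) (!s)) +
          c (min (t + Tmin (!s)) (T + 1)) (!s))) :
    ∀ d t, T + 1 ≤ t + d → 1 ≤ t → t ≤ T + 1 → ∀ s : Bool,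
      IsLeast {C : ℝ | ∃ u : ℕ → Bool, u (t - 1) = s ∧
        (∀ τ, t ≤ τ → τ ≤ T → u τ ≠ u (τ - 1) →
          ∀ t', τ ≤ t' → t' ≤ min (τ + Tmin (u τ) - 1) T → u t' = u τ) ∧
        C = ∑ t' ∈ Finset.Icc t T, L t' (u (t' - 1)) (u t')} (c t s) := by
  have hbase : ∀ s : Bool,
      IsLeast {C : ℝ | ∃ u : ℕ → Bool, u (T + 1 - 1) = s ∧
        (∀ τ, T + 1 ≤ τ → τ ≤ T → u τ ≠ u (τ - 1) →
          ∀ t', τ ≤ t' → t' ≤ min (τ + Tmin (u τ) - 1) T → u t' = u τ) ∧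
        C = ∑ t' ∈ Finset.Icc (T + 1) T, L t' (u (t' - 1)) (u t')} (c (T + 1) s) := by
    intro s
    constructor
    · exact ⟨fun _ => s, rfl, fun τ h1 h2 => absurd h2 (by omega),
        by rw [Finset.Icc_eq_empty (by omega), Finset.sum_empty, hterm]⟩
    · rintro C ⟨u, -, -, rfl⟩
      rw [Finset.Icc_eq_empty (by omega), Finset.sum_empty, hterm]
  intro d
  induction d with
  | zero =>
    intro t hd h1 h2
    obtain rfl : t = T + 1 := by omega
    exact hbase
  | succ d ih =>
    intro t hd h1 h2
    rcases eq_or_lt_of_le h2 with rfl | hlt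
    · exact hbase
    intro s
    have htT : t ≤ T := by omega
    have hm1 : 1 ≤ Tmin (!s) := hT1 (!s)
    set t₂ := min (t + Tmin (!s)) (T + 1) with ht₂
    have h21 : t + 1 ≤ t₂ := by omega
    have h22 : t₂ ≤ T + 1 := by omega
    have hmin1 : min (t + Tmin (!s) - 1) T = t₂ - 1 := by omega
    obtain ⟨⟨u₁, hu₁, hf₁, hs₁⟩, hlb₁⟩ := ih (t + 1) (by omega) (by omega) (by omega) s
    obtain ⟨⟨u₂, hu₂, hf₂, hs₂⟩, hlb₂⟩ := ih t₂ (by omega) (by omega) (by omega) (!s)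
    have hu₁t : u₁ t = s := by simpa using hu₁
    have hrw := hrec t s (by omega) htT
    rw [hmin1, ← ht₂] at hrw
    have hsplit : ∀ g : ℕ → ℝ, ∑ x ∈ Finset.Icc t T, g x
        = g t + (∑ x ∈ Finset.Icc (t+1) (t₂-1), g x) + ∑ x ∈ Finset.Icc t₂ T, g x := by
      intro g
      rw [sum_Icc_split g (a := t) (b := t₂ - 1) (by omega) (by omega) (by omega),
          sum_Icc_split g (a := t) (b := t) (by omega) (by omega) (by omega),
          show t₂ - 1 + 1 = t₂ from by omega, Finset.Icc_self, Finset.sum_singleton]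
    have hsplit1 : ∀ g : ℕ → ℝ, ∑ x ∈ Finset.Icc t T, g x
        = g t + ∑ x ∈ Finset.Icc (t+1) T, g x := by
      intro g
      rw [sum_Icc_split g (a := t) (b := t) (by omega) (by omega) (by omega),
          Finset.Icc_self, Finset.sum_singleton]
    constructor
    · -- membership: construct an optimal schedule
      rcases min_cases (L t s s + c (t + 1) s)
          (L t s (!s) + (∑ t' ∈ Finset.Icc (t + 1) (t₂ - 1), L t' (!s) (!s)) + c t₂ (!s))
        with ⟨heq, -⟩ | ⟨heq, -⟩ <;> rw [heq] at hrw
      · -- stay at s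
        refine ⟨fun τ => if τ < t then s else u₁ τ, if_pos (by omega), ?_, ?_⟩
        · intro τ hτ1 hτ2 hne t' h5 h6
          dsimp only at hne h6 ⊢
          rcases eq_or_lt_of_le hτ1 with rfl | hτ3
          · rw [if_neg (lt_irrefl t), hu₁t, if_pos (show t - 1 < t by omega)] at hne
            exact absurd rfl hne
          · rw [if_neg (show ¬ τ < t by omega)] at hne h6
            rw [if_neg (show ¬ τ - 1 < t by omega)] at hne
            rw [if_neg (show ¬ t' < t by omega), if_neg (show ¬ τ < t by omega)]
            exact hf₁ τ (by omega) hτ2 hne t' h5 h6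
        · rw [hrw, hs₁]
          simp only [hsplit1]
          rw [if_pos (show t - 1 < t by omega), if_neg (lt_irrefl t), hu₁t]
          congr 1
          exact Finset.sum_congr rfl fun x hx => by
            rw [Finset.mem_Icc] at hx
            rw [if_neg (show ¬ x < t by omega), if_neg (show ¬ x - 1 < t by omega)]
      · -- switch to !s
        refine ⟨fun τ => if τ < t then s else if τ < t₂ then !s else u₂ τ,
          if_pos (by omega), ?_, ?_⟩
        · intro τ hτ1 hτ2 hne t' h5 h6
          dsimp only at hne h6 ⊢
          by_cases hτ4 : τ < t₂
          · by_cases hEq : τ = t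
            · have hcond : ¬ τ < t := by omega
              rw [if_neg hcond, if_pos hτ4] at h6
              rw [if_neg hcond, if_pos hτ4, if_neg (show ¬ t' < t by omega),
                  if_pos (show t' < t₂ by omega)]
            · exfalso
              apply hne
              rw [if_neg (show ¬ τ < t by omega), if_pos hτ4,
                  if_neg (show ¬ τ - 1 < t by omega), if_pos (show τ - 1 < t₂ by omega)]
          · rw [if_neg (show ¬ τ < t by omega), if_neg hτ4] at hne h6 ⊢
            rw [if_neg (show ¬ τ - 1 < t by omega)] at hne
            by_cases hE2 : τ - 1 < t₂
            · rw [if_pos hE2] at hne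
              have hne' : u₂ τ ≠ u₂ (τ - 1) := by
                rw [show τ - 1 = t₂ - 1 from by omega, hu₂]
                exact hne
              rw [if_neg (show ¬ t' < t by omega), if_neg (show ¬ t' < t₂ by omega)]
              exact hf₂ τ (by omega) hτ2 hne' t' h5 h6
            · rw [if_neg hE2] at hne
              rw [if_neg (show ¬ t' < t by omega), if_neg (show ¬ t' < t₂ by omega)]
              exact hf₂ τ (by omega) hτ2 hne t' h5 h6
        · rw [hrw, hs₂]
          simp only [hsplit]
          rw [if_pos (show t - 1 < t by omega), if_neg (lt_irrefl t),
              if_pos (show t < t₂ by omega)]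
          congr 1
          · congr 1
            exact Finset.sum_congr rfl fun x hx => by
              rw [Finset.mem_Icc] at hx
              rw [if_neg (show ¬ x < t by omega), if_pos (show x < t₂ by omega),
                  if_neg (show ¬ x - 1 < t by omega), if_pos (show x - 1 < t₂ by omega)]
          · exact Finset.sum_congr rfl fun x hx => by
              rw [Finset.mem_Icc] at hx
              rw [if_neg (show ¬ x < t by omega), if_neg (show ¬ x < t₂ by omega),
                  if_neg (show ¬ x - 1 < t by omega)]
              by_cases hx2 : x - 1 < t₂
              · rw [if_pos hx2, show x - 1 = t₂ - 1 from by omega, hu₂]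
              · rw [if_neg hx2]
    · -- lower bound
      rintro C ⟨u, hu0, hf, rfl⟩
      by_cases hut : u t = s
      · rw [hrw]
        refine le_trans (min_le_left _ _) ?_
        simp only [hsplit1]
        rw [hu0, hut]
        exact add_le_add_right
          (hlb₁ ⟨u, hut, fun τ hτ1 => hf τ (by omega), rfl⟩) _
      · have hut' : u t = !s := Bool.eq_not_iff.mpr hut
        have hswitch : u t ≠ u (t - 1) := by rw [hut', hu0]; exact (Bool.not_ne_self s).symm ∘ Eq.symm
        have hft := hf t (by omega) htT hswitch
        rw [hut', hmin1] at hft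
        rw [hrw]
        refine le_trans (min_le_right _ _) ?_
        simp only [hsplit]
        rw [hu0, hut']
        refine add_le_add (le_of_eq ?_)
          (hlb₂ ⟨u, hft (t₂ - 1) (by omega) le_rfl, fun τ hτ1 => hf τ (by omega), rfl⟩)
        congr 1
        exact Finset.sum_congr rfl fun x hx => by
          rw [Finset.mem_Icc] at hx
          rw [hft x (by omega) (by omega), hft (x - 1) (by omega) (by omega)]


/-- Correctness of the backward-induction DP: the value
`c 1 s₀` defined by the stated recursion equals the minimum cost
`∑_{t=1}^T L_t(u_{t−1}, u_t)` over all feasible schedules with `u_0 = s₀`. -/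
theorem dp_value_is_min_cost
    (T : ℕ) (hT : 1 ≤ T) (L : ℕ → Bool → Bool → ℝ)
    (TU TD : ℕ) (hTU : 1 ≤ TU) (hTD : 1 ≤ TD)
    (Tmin : Bool → ℕ) (hTmin : Tmin true = TU ∧ Tmin false = TD)
    (s₀ : Bool) (c : ℕ → Bool → ℝ)
    (hterm : ∀ s, c (T + 1) s = 0)
    (hrec : ∀ t s, 1 ≤ t → t ≤ T →
      c t s = min (L t s s + c (t + 1) s)
        (L t s (!s) +
          (∑ t' ∈ Finset.Icc (t + 1) (min (t + Tmin (!s) - 1) T), L t' (!s) (!s)) +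
          c (min (t + Tmin (!s)) (T + 1)) (!s))) :
    IsLeast
      {C : ℝ | ∃ u : ℕ → Bool, u 0 = s₀ ∧ UCFeasible T Tmin u ∧
        C = ∑ t ∈ Finset.Icc 1 T, L t (u (t - 1)) (u t)}
      (c 1 s₀) := by
  have hT1 : ∀ s, 1 ≤ Tmin s := by
    intro s; cases s
    · rw [hTmin.2]; exact hTD
    · rw [hTmin.1]; exact hTU
  exact dp_aux T L Tmin hT1 c hterm hrec T 1 (by omega) le_rfl (by omega) s₀
end
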